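/- arXiv:1609.04348 — 5 statements merged into one kernel-verified Lean document; each statement's English description precedes it below -/
import Mathlib

section
/- The function ψ(z) = e^{-z²/2} z (2z²+3)/(2z²+1) satisfies ψ''(z) + (V(z) + 5)ψ(z) = 0 where V(z) = -z² - 2 - 8/(2z²+1) + 16/(2z²+1)². -/
theorem schroedinger_anharmonic_E_5
    (V ψ : ℝ → ℝ)
    (hV : ∀ z, V z = -z^2 - 2 - 8/(2*z^2+1) + 16/(2*z^2+1)^2)
    (hψ : ∀ z, ψ z = Real.exp (-z^2/2) * z * (2*z^2+3) / (2*z^2+1)) :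
    ∀ z : ℝ, deriv (deriv ψ) z + (V z + 5) * ψ z = 0 := by
  have hD : ∀ z : ℝ, (2*z^2+1) ≠ 0 := fun z => by positivity
  have he : ∀ z : ℝ, HasDerivAt (fun z : ℝ => Real.exp (-z^2/2))
      (Real.exp (-z^2/2) * (-z)) z := by
    intro z
    have h0 : HasDerivAt (fun z : ℝ => -z^2/2) (-z) z := by
      have := ((hasDerivAt_pow 2 z).neg.div_const 2)
      refine this.congr_deriv ?_
      push_cast
      ring
    exact h0.exp
  have h1 : ∀ z : ℝ, HasDerivAt ψ
      (Real.exp (-z^2/2) * (-4*z^6-4*z^4-3*z^2+3)/(2*z^2+1)^2) z := by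
    intro z
    have hv : HasDerivAt (fun z : ℝ => 2*z^2+1) (4*z) z := by
      have := ((hasDerivAt_pow 2 z).const_mul 2).add_const 1
      refine this.congr_deriv ?_
      push_cast
      ring
    have hu : HasDerivAt (fun z : ℝ => Real.exp (-z^2/2) * z * (2*z^2+3))
        (Real.exp (-z^2/2) * (-2*z^4+3*z^2+3)) z := by
      have h3 : HasDerivAt (fun z : ℝ => 2*z^2+3) (4*z) z := by
        have := ((hasDerivAt_pow 2 z).const_mul 2).add_const 3
        refine this.congr_deriv ?_
        push_cast
        ring
      have := ((he z).mul (hasDerivAt_id z)).mul h3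
      refine this.congr_deriv ?_
      simp only [id_eq, Pi.mul_apply]
      ring
    have heq : ψ = fun z => Real.exp (-z^2/2) * z * (2*z^2+3) / (2*z^2+1) :=
      funext hψ
    rw [heq]
    have := hu.div hv (hD z)
    refine this.congr_deriv ?_
    rw [div_eq_div_iff (by positivity) (by positivity)]
    field_simp
    ring
  have hd : deriv ψ = fun z =>
      Real.exp (-z^2/2) * (-4*z^6-4*z^4-3*z^2+3)/(2*z^2+1)^2 :=
    funext fun z => (h1 z).deriv
  have h2 : ∀ z : ℝ, HasDerivAt (deriv ψ)
      ((Real.exp (-z^2/2) * (4*z^7-20*z^5-13*z^3-9*z) * (2*z^2+1)^2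
        - Real.exp (-z^2/2) * (-4*z^6-4*z^4-3*z^2+3) * (2*(2*z^2+1)*(4*z)))
        / ((2*z^2+1)^2)^2) z := by
    intro z
    have hv : HasDerivAt (fun z : ℝ => 2*z^2+1) (4*z) z := by
      have := ((hasDerivAt_pow 2 z).const_mul 2).add_const 1
      refine this.congr_deriv ?_
      push_cast
      ring
    have hv2 : HasDerivAt (fun z : ℝ => (2*z^2+1)^2) (2*(2*z^2+1)*(4*z)) z := by
      have := hv.pow 2
      refine this.congr_deriv ?_
      push_cast
      ring
    have hp : HasDerivAt (fun z : ℝ => -4*z^6-4*z^4-3*z^2+3)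
        (-24*z^5-16*z^3-6*z) z := by
      have := ((((hasDerivAt_pow 6 z).const_mul (-4)).add
        ((hasDerivAt_pow 4 z).const_mul (-4))).add
        ((hasDerivAt_pow 2 z).const_mul (-3))).add_const 3
      rw [show (fun z : ℝ => -4*z^6-4*z^4-3*z^2+3) = fun x => ((((fun y : ℝ => -4 * y ^ 6) + fun y => -4 * y ^ 4) + fun y => -3 * y ^ 2 : ℝ → ℝ)) x + 3 by funext x; simp only [Pi.add_apply]; ring]
      refine this.congr_deriv ?_
      push_cast; ring
    have hu : HasDerivAt (fun z : ℝ => Real.exp (-z^2/2) * (-4*z^6-4*z^4-3*z^2+3))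
        (Real.exp (-z^2/2) * (4*z^7-20*z^5-13*z^3-9*z)) z := by
      have := (he z).mul hp
      refine this.congr_deriv ?_
      ring
    have := hu.div hv2 (by positivity)
    rw [hd]
    exact this
  intro z
  rw [hV z, hψ z, (h2 z).deriv]
  have hE := Real.exp_ne_zero (-z^2/2)
  field_simp
  ring
end

section
/- The function ψ(z) = e^{-z²/2}(4z⁴+4z²-1)/(2z²+1) satisfies ψ''(z) + (V(z) + 7)ψ(z) = 0 where V(z) = -z² - 2 - 8/(2z²+1) + 16/(2z²+1)². -/
theorem schroedinger_anharmonic_E_7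
    (V ψ : ℝ → ℝ)
    (hV : ∀ z, V z = -z^2 - 2 - 8/(2*z^2+1) + 16/(2*z^2+1)^2)
    (hψ : ∀ z, ψ z = Real.exp (-z^2/2) * (4*z^4+4*z^2-1) / (2*z^2+1)) :
    ∀ z : ℝ, deriv (deriv ψ) z + (V z + 7) * ψ z = 0 := by
  have hden : ∀ x : ℝ, 2*x^2+1 ≠ 0 := fun x => by positivity
  have he : ∀ x : ℝ, HasDerivAt (fun y : ℝ => Real.exp (-y^2/2))
      (Real.exp (-x^2/2) * (-x)) x := by
    intro x
    have h1 : HasDerivAt (fun y : ℝ => -y^2/2) (-x) x := by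
      have := ((hasDerivAt_pow 2 x).neg).div_const 2
      refine this.congr_deriv ?_
      push_cast
      ring
    simpa using h1.exp
  have hD : ∀ x : ℝ, HasDerivAt (fun y : ℝ => 2*y^2+1) (4*x) x := by
    intro x
    have := ((hasDerivAt_pow 2 x).const_mul 2).add_const 1
    refine this.congr_deriv ?_
    simp; ring
  have key : ∀ x : ℝ, HasDerivAt ψ
      (Real.exp (-x^2/2) * (13*x+14*x^3+4*x^5-8*x^7) / (2*x^2+1)^2) x := by
    intro x
    have hψ' : ψ = fun y => Real.exp (-y^2/2) * (4*y^4+4*y^2-1) / (2*y^2+1) :=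
      funext hψ
    rw [hψ']
    have hnum : HasDerivAt (fun y : ℝ => 4*y^4+4*y^2-1) (16*x^3+8*x) x := by
      have := (((hasDerivAt_pow 4 x).const_mul 4).add
        ((hasDerivAt_pow 2 x).const_mul 4)).sub_const 1
      refine this.congr_deriv ?_
      push_cast
      ring
    have := ((he x).mul hnum).div (hD x) (hden x)
    refine this.congr_deriv ?_
    simp only [Pi.mul_apply]
    field_simp
    ring
  have hd1 : deriv ψ = fun x =>
      Real.exp (-x^2/2) * (13*x+14*x^3+4*x^5-8*x^7) / (2*x^2+1)^2 :=
    funext fun x => (key x).deriv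
  intro z
  have hnum2 : HasDerivAt (fun y : ℝ => 13*y+14*y^3+4*y^5-8*y^7)
      (13+42*z^2+20*z^4-56*z^6) z := by
    have := ((((hasDerivAt_id z).const_mul 13).add
      ((hasDerivAt_pow 3 z).const_mul 14)).add
      ((hasDerivAt_pow 5 z).const_mul 4)).sub
      ((hasDerivAt_pow 7 z).const_mul 8)
    refine this.congr_deriv ?_
    push_cast
    ring
  have hD2 : HasDerivAt (fun y : ℝ => (2*y^2+1)^2) (2*(2*z^2+1)*(4*z)) z := by
    have := (hD z).pow 2
    refine this.congr_deriv ?_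
    ring
  have hd2 : HasDerivAt (deriv ψ)
      (((Real.exp (-z^2/2) * (-z) * (13*z+14*z^3+4*z^5-8*z^7)
        + Real.exp (-z^2/2) * (13+42*z^2+20*z^4-56*z^6)) * (2*z^2+1)^2
        - Real.exp (-z^2/2) * (13*z+14*z^3+4*z^5-8*z^7) * (2*(2*z^2+1)*(4*z)))
        / ((2*z^2+1)^2)^2) z := by
    rw [hd1]
    exact ((he z).mul hnum2).div hD2 (pow_ne_zero 2 (hden z))
  rw [hd2.deriv, hV z, hψ z]
  have h0 := hden z
  field_simp
  ring
end

section
/- The function ψ(z) = e^{-z²/2} z (4z⁴-5)/(2z²+1) satisfies ψ''(z) + (V(z) + 9)ψ(z) = 0 where V(z) = -z² - 2 - 8/(2z²+1) + 16/(2z²+1)². -/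
private lemma denom_ne (z : ℝ) : (2*z^2+1) ≠ 0 := by positivity

private lemma hasDerivAt_psi (z : ℝ) :
    HasDerivAt (fun z : ℝ => Real.exp (-z^2/2) * z * (4*z^4-5) / (2*z^2+1))
      (Real.exp (-z^2/2) * (-8*z^8+20*z^6+30*z^4+15*z^2-5) / (2*z^2+1)^2) z := by
  have he : HasDerivAt (fun z : ℝ => Real.exp (-z^2/2))
      (Real.exp (-z^2/2) * (-(2*z^(2-1))/2)) z := by
    exact (HasDerivAt.exp (((hasDerivAt_pow 2 z).neg.div_const 2)))
  have hnum := (he.mul (hasDerivAt_id z)).mul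
      (((hasDerivAt_pow 4 z).const_mul 4).sub_const 5)
  have hden := ((hasDerivAt_pow 2 z).const_mul 2).add_const (1:ℝ)
  have h := hnum.div hden (denom_ne z)
  refine (h.congr_deriv ?_).congr_of_eventuallyEq (Filter.Eventually.of_forall fun x => ?_)
  · have := denom_ne z
    simp only [Pi.mul_apply, Pi.div_apply, id]
    field_simp
    ring
  · simp only [Pi.mul_apply, Pi.div_apply, id]

private lemma hasDerivAt_psi' (z : ℝ) :
    HasDerivAt (fun z : ℝ => Real.exp (-z^2/2) * (-8*z^8+20*z^6+30*z^4+15*z^2-5) / (2*z^2+1)^2)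
      (Real.exp (-z^2/2) * (16*z^11-96*z^9-64*z^7+60*z^5+55*z^3+75*z) / (2*z^2+1)^3) z := by
  have he : HasDerivAt (fun z : ℝ => Real.exp (-z^2/2))
      (Real.exp (-z^2/2) * (-(2*z^(2-1))/2)) z := by
    exact (HasDerivAt.exp (((hasDerivAt_pow 2 z).neg.div_const 2)))
  have hp := (((((hasDerivAt_pow 8 z).const_mul (-8:ℝ)).add
      ((hasDerivAt_pow 6 z).const_mul (20:ℝ))).add
      ((hasDerivAt_pow 4 z).const_mul (30:ℝ))).add
      ((hasDerivAt_pow 2 z).const_mul (15:ℝ))).sub_const (5:ℝ)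
  have hden := (((hasDerivAt_pow 2 z).const_mul (2:ℝ)).add_const (1:ℝ)).pow 2
  have hd0 : ((2*z^2+1)^2 : ℝ) ≠ 0 := pow_ne_zero 2 (denom_ne z)
  have h := (he.mul hp).div hden hd0
  refine (h.congr_deriv ?_).congr_of_eventuallyEq (Filter.Eventually.of_forall fun x => ?_)
  · have := denom_ne z
    simp only [Pi.mul_apply, Pi.div_apply, Pi.add_apply, Pi.pow_apply, id]
    field_simp
    ring
  · simp only [Pi.mul_apply, Pi.div_apply, Pi.add_apply, Pi.pow_apply, id]

theorem schroedinger_anharmonic_E_9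
    (V ψ : ℝ → ℝ)
    (hV : ∀ z, V z = -z^2 - 2 - 8/(2*z^2+1) + 16/(2*z^2+1)^2)
    (hψ : ∀ z, ψ z = Real.exp (-z^2/2) * z * (4*z^4-5) / (2*z^2+1)) :
    ∀ z : ℝ, deriv (deriv ψ) z + (V z + 9) * ψ z = 0 := by
  intro z
  have hψf : ψ = fun z => Real.exp (-z^2/2) * z * (4*z^4-5) / (2*z^2+1) := funext hψ
  have hd1 : deriv ψ = fun z =>
      Real.exp (-z^2/2) * (-8*z^8+20*z^6+30*z^4+15*z^2-5) / (2*z^2+1)^2 := by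
    funext x
    rw [hψf]
    exact (hasDerivAt_psi x).deriv
  have hd2 : deriv (deriv ψ) z =
      Real.exp (-z^2/2) * (16*z^11-96*z^9-64*z^7+60*z^5+55*z^3+75*z) / (2*z^2+1)^3 := by
    rw [hd1]
    exact (hasDerivAt_psi' z).deriv
  rw [hd2, hV, hψ]
  have := denom_ne z
  field_simp
  ring
end

section
/- The function ψ(z) = e^{-z/4} z (z³+6z²+18z+24)/(z²+2z+2) satisfies ψ''(z) + (V(z) - 1/16)ψ(z) = 0 for all real z ≠ 0, where V(z) = 1/z - 4/(z²+2z+2) + 8/(z²+2z+2)². -/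
noncomputable def ψ₀ : ℝ → ℝ := fun z => Real.exp (-z/4) * z * (z^3+6*z^2+18*z+24) / (z^2+2*z+2)

noncomputable def ψ₁ : ℝ → ℝ := fun z =>
  Real.exp (-z/4) * (-(1/4)*z^6 + 4*z^4 + 14*z^3 + 27*z^2 + 60*z + 48) / (z^2+2*z+2)^2

noncomputable def ψ₂ : ℝ → ℝ := fun z =>
  Real.exp (-z/4) * ((1/16)*z^8 - (3/8)*z^7 - (23/8)*z^6 - (17/2)*z^5 - (55/4)*z^4
    - (59/2)*z^3 - (303/2)*z^2 - 258*z - 96) / (z^2+2*z+2)^3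

lemma hd_fix {f : ℝ → ℝ} {f' z : ℝ} (h : HasDerivAt f f' z) : HasDerivAt f f' z := h

lemma Dpos (z : ℝ) : z^2+2*z+2 > 0 := by nlinarith [sq_nonneg (z+1)]

lemma Dne (z : ℝ) : z^2+2*z+2 ≠ 0 := ne_of_gt (Dpos z)

lemma expD (z : ℝ) : HasDerivAt (fun z : ℝ => Real.exp (-z/4)) (-(1/4) * Real.exp (-z/4)) z := by
  have h : HasDerivAt (fun z : ℝ => -z/4) (-(1/4)) z := by
    have := (hasDerivAt_id z).neg.div_const 4
    exact (hd_fix this).congr_deriv (by norm_num)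
  refine (hd_fix ((Real.hasDerivAt_exp (-z/4)).comp z h)).congr_deriv ?_; ring

lemma hd1 (z : ℝ) : HasDerivAt ψ₀ (ψ₁ z) z := by
  have hnum : HasDerivAt (fun z : ℝ => Real.exp (-z/4) * z * (z^3+6*z^2+18*z+24))
      ((-(1/4) * Real.exp (-z/4)) * z * (z^3+6*z^2+18*z+24)
        + Real.exp (-z/4) * (z^3+6*z^2+18*z+24)
        + Real.exp (-z/4) * z * (3*z^2+12*z+18)) z := by
    have h1 : HasDerivAt (fun z : ℝ => Real.exp (-z/4) * z)
        ((-(1/4) * Real.exp (-z/4)) * z + Real.exp (-z/4)) z := by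
      exact (hd_fix ((expD z).mul (hasDerivAt_id z))).congr_deriv (by simp only [id]; ring)
    have h2 : HasDerivAt (fun z : ℝ => z^3+6*z^2+18*z+24) (3*z^2+12*z+18) z := by
      have := (((hasDerivAt_pow 3 z).add ((hasDerivAt_pow 2 z).const_mul 6)).add
        ((hasDerivAt_id z).const_mul 18)).add_const 24
      exact (hd_fix this).congr_deriv (by norm_num <;> ring)
    have := h1.mul h2
    exact (hd_fix this).congr_deriv (by ring)
  have hden : HasDerivAt (fun z : ℝ => z^2+2*z+2) (2*z+2) z := by
    have := ((hasDerivAt_pow 2 z).add ((hasDerivAt_id z).const_mul 2)).add_const 2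
    exact (hd_fix this).congr_deriv (by norm_num <;> ring)
  have := hnum.div hden (Dne z)
  refine (hd_fix this).congr_deriv ?_
  unfold ψ₁
  field_simp
  ring

lemma hd2 (z : ℝ) : HasDerivAt ψ₁ (ψ₂ z) z := by
  have hnum : HasDerivAt
      (fun z : ℝ => Real.exp (-z/4) * (-(1/4)*z^6 + 4*z^4 + 14*z^3 + 27*z^2 + 60*z + 48))
      ((-(1/4) * Real.exp (-z/4)) * (-(1/4)*z^6 + 4*z^4 + 14*z^3 + 27*z^2 + 60*z + 48)
        + Real.exp (-z/4) * (-(3/2)*z^5 + 16*z^3 + 42*z^2 + 54*z + 60)) z := by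
    have h2 : HasDerivAt (fun z : ℝ => -(1/4)*z^6 + 4*z^4 + 14*z^3 + 27*z^2 + 60*z + 48)
        (-(3/2)*z^5 + 16*z^3 + 42*z^2 + 54*z + 60) z := by
      have := (((((hasDerivAt_pow 6 z).const_mul (-(1/4) : ℝ)).add
        ((hasDerivAt_pow 4 z).const_mul 4)).add ((hasDerivAt_pow 3 z).const_mul 14)).add
        ((hasDerivAt_pow 2 z).const_mul 27)).add (((hasDerivAt_id z).const_mul 60).add_const 48)
      convert hd_fix this using 1
      · funext x; simp only [id, Pi.add_apply]; ring
      · push_cast; norm_num; ring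
    exact (expD z).mul h2
  have hden : HasDerivAt (fun z : ℝ => (z^2+2*z+2)^2) (2*(z^2+2*z+2)*(2*z+2)) z := by
    have hD : HasDerivAt (fun z : ℝ => z^2+2*z+2) (2*z+2) z := by
      have := ((hasDerivAt_pow 2 z).add ((hasDerivAt_id z).const_mul 2)).add_const 2
      exact (hd_fix this).congr_deriv (by norm_num <;> ring)
    have := (hasDerivAt_pow 2 (z^2+2*z+2)).comp z hD
    exact (hd_fix this).congr_deriv (by norm_num <;> ring)
  have := hnum.div hden (pow_ne_zero 2 (Dne z))
  refine (hd_fix this).congr_deriv ?_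
  unfold ψ₂
  have h := Dne z
  field_simp
  ring

theorem schroedinger_fusion_E_neg_sixteenth
    (V ψ : ℝ → ℝ)
    (hV : ∀ z, z ≠ 0 → V z = 1/z - 4/(z^2+2*z+2) + 8/(z^2+2*z+2)^2)
    (hψ : ∀ z, ψ z = Real.exp (-z/4) * z * (z^3+6*z^2+18*z+24) / (z^2+2*z+2)) :
    ∀ z : ℝ, z ≠ 0 → deriv (deriv ψ) z + (V z - 1/16) * ψ z = 0 := by
  have hψ0 : ψ = ψ₀ := funext fun z => hψ z
  subst hψ0
  have hD1 : deriv ψ₀ = ψ₁ := funext fun z => (hd1 z).deriv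
  intro z hz
  rw [hD1, (hd2 z).deriv, hV z hz, hψ z]
  have h := Dne z
  have h' : z * (z + 2) + 2 ≠ 0 := by nlinarith [sq_nonneg (z+1)]
  unfold ψ₂
  field_simp
  ring
end

section
/- The function ψ(z) = e^{-z/6} z (z⁴-4z³-40z²-144z-216)/(z²+2z+2) satisfies ψ''(z) + (V(z) - 1/36)ψ(z) = 0 for all real z ≠ 0, where V(z) = 1/z - 4/(z²+2z+2) + 8/(z²+2z+2)². -/
set_option maxHeartbeats 1000000

theorem schroedinger_fusion_E_neg_thirtysixth
    (V ψ : ℝ → ℝ)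
    (hV : ∀ z, z ≠ 0 → V z = 1/z - 4/(z^2+2*z+2) + 8/(z^2+2*z+2)^2)
    (hψ : ∀ z, ψ z = Real.exp (-z/6) * z * (z^4-4*z^3-40*z^2-144*z-216) / (z^2+2*z+2)) :
    ∀ z : ℝ, z ≠ 0 → deriv (deriv ψ) z + (V z - 1/36) * ψ z = 0 := by
  have hQ : ∀ x : ℝ, x^2 + 2*x + 2 ≠ 0 := by
    intro x; nlinarith [sq_nonneg (x+1)]
  have hψf : ψ = fun z => Real.exp (-z/6) * z * (z^4-4*z^3-40*z^2-144*z-216) / (z^2+2*z+2) :=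
    funext hψ
  have hexp : ∀ x : ℝ, HasDerivAt (fun z : ℝ => Real.exp (-z/6)) (Real.exp (-x/6) * (-1/6)) x := by
    intro x
    have h : HasDerivAt (fun z : ℝ => -z/6) (-1/6) x := by
      simpa using ((hasDerivAt_id x).neg.div_const 6)
    exact h.exp
  have hden : ∀ x : ℝ, HasDerivAt (fun z : ℝ => z^2+2*z+2) (2*x+2) x := by
    intro x
    have h := (((hasDerivAt_pow 2 x).add ((hasDerivAt_id x).const_mul 2)).add_const 2)
    refine h.congr_deriv ?_; push_cast; ring
  have key : ∀ x : ℝ, HasDerivAt ψ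
      (Real.exp (-x/6) * (-(1/6)*x^7 + (10/3)*x^6 + (23/3)*x^5 - (46/3)*x^4 - (284/3)*x^3
        - 192*x^2 - 504*x - 432) / (x^2+2*x+2)^2) x := by
    intro x
    rw [hψf]
    have hq4 : HasDerivAt (fun z : ℝ => z^4-4*z^3-40*z^2-144*z-216)
        (4*x^3 - 12*x^2 - 80*x - 144) x := by
      have h := ((((hasDerivAt_pow 4 x).sub ((hasDerivAt_pow 3 x).const_mul 4)).sub
        ((hasDerivAt_pow 2 x).const_mul 40)).sub ((hasDerivAt_id x).const_mul 144)).sub_const 216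
      refine h.congr_deriv ?_; push_cast; ring
    have hN := ((hexp x).mul (hasDerivAt_id x)).mul hq4
    have h := hN.div (hden x) (hQ x)
    refine h.congr_deriv ?_
    simp only [id_eq, Pi.mul_apply]
    rw [div_eq_div_iff (pow_ne_zero 2 (hQ x)) (pow_ne_zero 2 (hQ x))]
    ring
  have hdψ : deriv ψ = fun x => Real.exp (-x/6) * (-(1/6)*x^7 + (10/3)*x^6 + (23/3)*x^5
      - (46/3)*x^4 - (284/3)*x^3 - 192*x^2 - 504*x - 432) / (x^2+2*x+2)^2 :=
    funext fun x => (key x).deriv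
  have key2 : ∀ x : ℝ, HasDerivAt (deriv ψ)
      (Real.exp (-x/6) * ((1/36)*x^9 - x^8 + (8/3)*x^7 + (278/9)*x^6 + (313/3)*x^5
        + (536/3)*x^4 + (2264/9)*x^3 + 1248*x^2 + 2280*x + 864) / (x^2+2*x+2)^3) x := by
    intro x
    rw [hdψ]
    have hA : HasDerivAt (fun z : ℝ => -(1/6)*z^7 + (10/3)*z^6 + (23/3)*z^5 - (46/3)*z^4
        - (284/3)*z^3 - 192*z^2 - 504*z - 432)
        (-(7/6)*x^6 + 20*x^5 + (115/3)*x^4 - (184/3)*x^3 - 284*x^2 - 384*x - 504) x := by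
      have h := ((((((((hasDerivAt_pow 7 x).const_mul (-(1/6))).add
        ((hasDerivAt_pow 6 x).const_mul (10/3))).add
        ((hasDerivAt_pow 5 x).const_mul (23/3))).sub
        ((hasDerivAt_pow 4 x).const_mul (46/3))).sub
        ((hasDerivAt_pow 3 x).const_mul (284/3))).sub
        ((hasDerivAt_pow 2 x).const_mul 192)).sub
        ((hasDerivAt_id x).const_mul 504)).sub_const 432
      refine h.congr_deriv ?_; push_cast; ring
    have h := ((hexp x).mul hA).div ((hden x).pow 2) (pow_ne_zero 2 (hQ x))
    refine h.congr_deriv ?_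
    simp only [Pi.mul_apply, Pi.pow_apply]
    symm
    rw [div_eq_div_iff (pow_ne_zero 3 (hQ x)) (pow_ne_zero 2 (pow_ne_zero 2 (hQ x)))]
    push_cast
    ring
  intro z hz
  rw [(key2 z).deriv, hV z hz, hψ z]
  have hQz := hQ z
  have hQz' : z * (z + 2) + 2 ≠ 0 := by nlinarith [sq_nonneg (z+1)]
  field_simp
  ring
end
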